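/- Assume condition (6) holds, let A ∈ 𝔏_Λ, and for each word w set a_w = ⟨A ξ_e, ξ_w⟩. Then for every word v in F_n^+ and every word w in F_n^+ one has ⟨A ξ_v, ξ_{wv}⟩ = W_μ(e,v)^{-1} · a_w · W_μ(w,v), and ⟨A ξ_v, ξ_x⟩ = 0 for every word x that is not of the form x = wv for some word w. -/

import Mathlib

noncomputable section

/-- Auxiliary recursion for the weight function: `W(u, []) = 1` and, reading the word
`w = i_k ⋯ i_1` as the list `[i_k, …, i_1]`,
`W(u, i :: w) = λ_{i, w·u} · W(u, w)`, so that
`W(u, i_k⋯i_1) = λ_{i_1,u} · λ_{i_2, i_1 u} ⋯ λ_{i_k, i_{k-1}⋯i_1 u}`. -/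
def Waux {n : ℕ} (lam : Fin n → FreeMonoid (Fin n) → ℝ) (u : FreeMonoid (Fin n)) :
    List (Fin n) → ℝ
  | [] => 1
  | i :: w => lam i (FreeMonoid.ofList w * u) * Waux lam u w

/-- The weight function `W : F_n^+ × F_n^+ → ℝ` associated to the weights `λ_{i,w}`. -/
def Wfun {n : ℕ} (lam : Fin n → FreeMonoid (Fin n) → ℝ) (u w : FreeMonoid (Fin n)) : ℝ :=
  Waux lam u (FreeMonoid.toList w)

instance {n : ℕ} : DecidableEq (FreeMonoid (Fin n)) := Classical.decEq _

/-- `n`-variable Fock space `H_n = ℓ²(F_n^+)`. -/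
abbrev Hn (n : ℕ) : Type := lp (fun _ : FreeMonoid (Fin n) => ℂ) 2

/-- The standard orthonormal basis vector `ξ_w` of `H_n`. -/
def xi {n : ℕ} (w : FreeMonoid (Fin n)) : Hn n := lp.single 2 w 1

/-- The unital WOT-closed algebra generated by a tuple of bounded operators on `H_n`:
the closure, in the weak operator topology, of the unital subalgebra they generate. -/
def wotAlg {n : ℕ} (T : Fin n → (Hn n →L[ℂ] Hn n)) : Set (Hn n →L[ℂ] Hn n) :=
  (ContinuousLinearMapWOT.ofCLM :
    (Hn n →L[ℂ] Hn n) → ContinuousLinearMapWOT (RingHom.id ℂ) (Hn n) (Hn n)) ⁻¹'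
    (closure ((ContinuousLinearMapWOT.ofCLM :
    (Hn n →L[ℂ] Hn n) → ContinuousLinearMapWOT (RingHom.id ℂ) (Hn n) (Hn n)) ''
      (Algebra.adjoin ℂ (Set.range T) : Subalgebra ℂ (Hn n →L[ℂ] Hn n))))

/-- Auxiliary recursion for the right weight function: reading `w = i_1 ⋯ i_k` as the
list `[i_1, …, i_k]`, `W_μ(v, i :: w) = μ_{i,v} · W_μ(v·i, w)`, so that
`W_μ(v, i_1⋯i_k) = μ_{i_1,v} · μ_{i_2, v i_1} ⋯ μ_{i_k, v i_1⋯i_{k-1}}`. -/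
def WmuAux {n : ℕ} (mu : Fin n → FreeMonoid (Fin n) → ℝ) :
    FreeMonoid (Fin n) → List (Fin n) → ℝ
  | _, [] => 1
  | v, i :: w => mu i v * WmuAux mu (v * FreeMonoid.of i) w

/-- The right weight function `W_μ : F_n^+ × F_n^+ → ℝ`. -/
def WmuFun {n : ℕ} (mu : Fin n → FreeMonoid (Fin n) → ℝ) (v w : FreeMonoid (Fin n)) : ℝ :=
  WmuAux mu v (FreeMonoid.toList w)

/-- The right weights `μ_{i,w} = W(i,w) · W(e,w)⁻¹` coming from condition (6). -/
def muW {n : ℕ} (lam : Fin n → FreeMonoid (Fin n) → ℝ) :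
    Fin n → FreeMonoid (Fin n) → ℝ :=
  fun i w => Wfun lam (FreeMonoid.of i) w * (Wfun lam 1 w)⁻¹

section AuxLemmas

open FreeMonoid

variable {n : ℕ} {lam : Fin n → FreeMonoid (Fin n) → ℝ}

lemma Waux_append (u : FreeMonoid (Fin n)) (l1 l2 : List (Fin n)) :
    Waux lam u (l1 ++ l2) = Waux lam (FreeMonoid.ofList l2 * u) l1 * Waux lam u l2 := by
  induction l1 with
  | nil => simp [Waux]
  | cons i l1 ih =>
    show lam i (FreeMonoid.ofList (l1 ++ l2) * u) * Waux lam u (l1 ++ l2)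
        = lam i (FreeMonoid.ofList l1 * (FreeMonoid.ofList l2 * u))
          * Waux lam (FreeMonoid.ofList l2 * u) l1 * Waux lam u l2
    rw [ih, FreeMonoid.ofList_append, mul_assoc (FreeMonoid.ofList l1), mul_assoc]

lemma Wfun_mul (u w1 w2 : FreeMonoid (Fin n)) :
    Wfun lam u (w1 * w2) = Wfun lam (w2 * u) w1 * Wfun lam u w2 := by
  unfold Wfun
  rw [FreeMonoid.toList_mul, Waux_append, FreeMonoid.ofList_toList]

lemma Waux_pos (hpos : ∀ i w, 0 < lam i w) (u : FreeMonoid (Fin n)) (l : List (Fin n)) :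
    0 < Waux lam u l := by
  induction l with
  | nil => exact one_pos
  | cons i l ih => exact mul_pos (hpos _ _) ih

lemma Wfun_pos (hpos : ∀ i w, 0 < lam i w) (u w : FreeMonoid (Fin n)) :
    0 < Wfun lam u w := Waux_pos hpos u _

lemma muW_pos (hpos : ∀ i w, 0 < lam i w) (i : Fin n) (w : FreeMonoid (Fin n)) :
    0 < muW lam i w :=
  mul_pos (Wfun_pos hpos _ _) (inv_pos.2 (Wfun_pos hpos _ _))

lemma WmuAux_pos (hpos : ∀ i w, 0 < lam i w) (v : FreeMonoid (Fin n)) (l : List (Fin n)) :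
    0 < WmuAux (muW lam) v l := by
  induction l generalizing v with
  | nil => exact one_pos
  | cons i l ih => exact mul_pos (muW_pos hpos _ _) (ih _)

lemma WmuFun_pos (hpos : ∀ i w, 0 < lam i w) (v w : FreeMonoid (Fin n)) :
    0 < WmuFun (muW lam) v w := WmuAux_pos hpos v _

lemma muW_step (hpos : ∀ i w, 0 < lam i w) (j : Fin n) (u w : FreeMonoid (Fin n)) :
    muW lam j u * Wfun lam (u * FreeMonoid.of j) w = Wfun lam u w * muW lam j (w * u) := by
  unfold muW
  rw [Wfun_mul (FreeMonoid.of j) w u, show Wfun lam 1 (w * u)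
      = Wfun lam u w * Wfun lam 1 u by rw [Wfun_mul 1 w u, mul_one]]
  have h1 := (Wfun_pos (lam := lam) hpos 1 u).ne'
  have h2 := (Wfun_pos (lam := lam) hpos u w).ne'
  field_simp

lemma key_aux (hpos : ∀ i w, 0 < lam i w) (l : List (Fin n)) (u w : FreeMonoid (Fin n)) :
    Wfun lam (u * FreeMonoid.ofList l) w * WmuAux (muW lam) u l
      = Wfun lam u w * WmuAux (muW lam) (w * u) l := by
  induction l generalizing u with
  | nil => simp [WmuAux, show FreeMonoid.ofList ([] : List (Fin n)) = 1 from rfl]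
  | cons j l ih =>
    have h1 : u * FreeMonoid.ofList (j :: l)
        = (u * FreeMonoid.of j) * FreeMonoid.ofList l := by
      rw [show FreeMonoid.ofList (j :: l) = FreeMonoid.of j * FreeMonoid.ofList l from rfl,
        mul_assoc]
    rw [h1]
    show Wfun lam (u * FreeMonoid.of j * FreeMonoid.ofList l) w
        * (muW lam j u * WmuAux (muW lam) (u * FreeMonoid.of j) l)
      = Wfun lam u w * (muW lam j (w * u) * WmuAux (muW lam) (w * u * FreeMonoid.of j) l)
    rw [mul_assoc w u (FreeMonoid.of j)]
    have h2 := ih (u * FreeMonoid.of j)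
    have h3 := muW_step hpos j u w
    linear_combination muW lam j u * h2
      + WmuAux (muW lam) (w * (u * FreeMonoid.of j)) l * h3

/-- The key identity `W(v,w) = W_μ(e,v)⁻¹ · W(e,w) · W_μ(w,v)`. -/
lemma key_identity (hpos : ∀ i w, 0 < lam i w) (v w : FreeMonoid (Fin n)) :
    Wfun lam v w = (WmuFun (muW lam) 1 v)⁻¹ * Wfun lam 1 w * WmuFun (muW lam) w v := by
  have h := key_aux hpos (FreeMonoid.toList v) 1 w
  rw [one_mul, FreeMonoid.ofList_toList, mul_one] at h
  rw [show WmuAux (muW lam) 1 (FreeMonoid.toList v) = WmuFun (muW lam) 1 v from rfl,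
    show WmuAux (muW lam) w (FreeMonoid.toList v) = WmuFun (muW lam) w v from rfl] at h
  have hpos1 := (WmuFun_pos (lam := lam) hpos 1 v).ne'
  field_simp
  linear_combination h

/-- `⟨ξ_y, ξ_z⟩ = δ_{y,z}`. -/
lemma inner_xi (y z : FreeMonoid (Fin n)) :
    (inner ℂ (xi y) (xi z) : ℂ) = if y = z then 1 else 0 := by
  rw [xi, xi, lp.inner_single_left]
  by_cases h : y = z
  · subst h
    simp [lp.single_apply_self]
  · rw [lp.single_apply_ne (E := fun _ : FreeMonoid (Fin n) => ℂ) 2 z 1 h, if_neg h]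
    simp

end AuxLemmas

/-- Assume condition (6) holds, let `A ∈ 𝔏_Λ`, and set
`a_w = ⟨A ξ_e, ξ_w⟩`. Then for all words `v, w`,
`⟨A ξ_v, ξ_{wv}⟩ = W_μ(e,v)⁻¹ · a_w · W_μ(w,v)`, and `⟨A ξ_v, ξ_x⟩ = 0` whenever `x`
is not of the form `x = wv`. -/
theorem LLambda_fourier_expansion (n : ℕ) (hn : 2 ≤ n)
    (lam : Fin n → FreeMonoid (Fin n) → ℝ)
    (hpos : ∀ i w, 0 < lam i w) (hbdd : ∃ C : ℝ, ∀ i w, lam i w ≤ C)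
    (h6 : ∃ C : ℝ, ∀ i w, Wfun lam (FreeMonoid.of i) w * (Wfun lam 1 w)⁻¹ ≤ C)
    (T : Fin n → (Hn n →L[ℂ] Hn n))
    (hT : ∀ i w, T i (xi w) = (lam i w : ℂ) • xi (FreeMonoid.of i * w))
    (A : Hn n →L[ℂ] Hn n) (hA : A ∈ wotAlg T)
    (a : FreeMonoid (Fin n) → ℂ) (ha : ∀ w, a w = @inner ℂ _ _ (A (xi 1)) (xi w)) :
    (∀ v w : FreeMonoid (Fin n),
        @inner ℂ _ _ (A (xi v)) (xi (w * v)) =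
          ((WmuFun (muW lam) 1 v)⁻¹ : ℂ) * a w * (WmuFun (muW lam) w v : ℂ)) ∧
      (∀ v x : FreeMonoid (Fin n), (¬ ∃ w, x = w * v) →
        @inner ℂ _ _ (A (xi v)) (xi x) = 0) := by
  classical
  set mu := muW lam with hmu
  -- Step 1: monomials act as weighted shifts.
  have hmono : ∀ B ∈ Submonoid.closure (Set.range T),
      ∃ u : FreeMonoid (Fin n), ∀ v, B (xi v) = ((Wfun lam v u : ℝ) : ℂ) • xi (u * v) := by
    intro B hB
    induction hB using Submonoid.closure_induction with
    | mem x hx =>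
      obtain ⟨i, rfl⟩ := hx
      refine ⟨FreeMonoid.of i, fun v => ?_⟩
      rw [hT]
      congr 1
      norm_cast
      simp [Wfun, Waux, show FreeMonoid.ofList ([] : List (Fin n)) = 1 from rfl]
    | one =>
      refine ⟨1, fun v => ?_⟩
      simp [Wfun, Waux, show FreeMonoid.toList (1 : FreeMonoid (Fin n)) = [] from rfl]
    | mul x y hx hy ihx ihy =>
      obtain ⟨u1, h1⟩ := ihx
      obtain ⟨u2, h2⟩ := ihy
      refine ⟨u1 * u2, fun v => ?_⟩
      rw [ContinuousLinearMap.mul_apply, h2, map_smul, h1, smul_smul, mul_assoc u1 u2 v,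
        Wfun_mul v u1 u2]
      congr 1
      push_cast
      ring
  -- Step 2: monomials satisfy the predicate, hence so does the whole algebra by linearity
  have halg : ∀ B ∈ Algebra.adjoin ℂ (Set.range T),
      (∀ v w : FreeMonoid (Fin n), (inner ℂ (xi (w * v)) (B (xi v)) : ℂ) =
          ((((WmuFun mu 1 v)⁻¹ * WmuFun mu w v : ℝ)) : ℂ) * inner ℂ (xi w) (B (xi 1))) ∧
      (∀ v x : FreeMonoid (Fin n), (¬ ∃ w, x = w * v) →
          (inner ℂ (xi x) (B (xi v)) : ℂ) = 0) := by
    intro B hB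
    have hB' : B ∈ Submodule.span ℂ ((Submonoid.closure (Set.range T) : Submonoid _) :
        Set (Hn n →L[ℂ] Hn n)) := by
      rw [← Algebra.adjoin_eq_span]
      exact hB
    clear hB
    induction hB' using Submodule.span_induction with
    | mem x hx =>
      obtain ⟨u, hu⟩ := hmono x hx
      constructor
      · intro v w
        rw [hu v, hu 1, mul_one, inner_smul_right, inner_smul_right, inner_xi, inner_xi]
        by_cases hw : w = u
        · subst hw
          rw [if_pos rfl, if_pos rfl, mul_one, mul_one]
          have hk := key_identity hpos v w
          rw [hk]
          push_cast
          ring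
        · rw [if_neg (fun h => hw (mul_right_cancel h)), if_neg hw]
          ring
      · intro v x hx'
        rw [hu v, inner_smul_right, inner_xi, if_neg, mul_zero]
        intro h
        exact hx' ⟨u, h⟩
    | zero =>
      constructor
      · intro v w
        simp
      · intro v x hx
        simp
    | add x y hx hy ihx ihy =>
      constructor
      · intro v w
        simp only [ContinuousLinearMap.add_apply, inner_add_right, ihx.1 v w, ihy.1 v w]
        ring
      · intro v x' hx'
        simp only [ContinuousLinearMap.add_apply, inner_add_right, ihx.2 v x' hx',
          ihy.2 v x' hx', add_zero]
    | smul c x hx ihx =>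
      constructor
      · intro v w
        simp only [ContinuousLinearMap.smul_apply, inner_smul_right, ihx.1 v w]
        ring
      · intro v x' hx'
        simp only [ContinuousLinearMap.smul_apply, inner_smul_right, ihx.2 v x' hx',
          mul_zero]
  -- Step 3: pass to the WOT closure.
  have hcont : ∀ (x y : Hn n),
      Continuous fun B : (Hn n →WOT[ℂ] Hn n) => (inner ℂ y (B x) : ℂ) := by
    intro x y
    have := ContinuousLinearMapWOT.continuous_dual_apply (𝕜₁ := ℂ) (𝕜₂ := ℂ) (σ := RingHom.id ℂ) (E := Hn n) (F := Hn n)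
      x (InnerProductSpace.toDual ℂ (Hn n) y)
    simpa [InnerProductSpace.toDual_apply_apply] using this
  set S : Set (Hn n →WOT[ℂ] Hn n) :=
    {B | (∀ v w : FreeMonoid (Fin n), (inner ℂ (xi (w * v)) (B (xi v)) : ℂ) =
        ((((WmuFun mu 1 v)⁻¹ * WmuFun mu w v : ℝ)) : ℂ) * inner ℂ (xi w) (B (xi 1)))} ∩
    {B | (∀ v x : FreeMonoid (Fin n), (¬ ∃ w, x = w * v) →
        (inner ℂ (xi x) (B (xi v)) : ℂ) = 0)} with hS
  have hSclosed : IsClosed S := by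
    refine IsClosed.inter ?_ ?_
    · have : {B : Hn n →WOT[ℂ] Hn n | ∀ v w : FreeMonoid (Fin n),
          (inner ℂ (xi (w * v)) (B (xi v)) : ℂ) =
          ((((WmuFun mu 1 v)⁻¹ * WmuFun mu w v : ℝ)) : ℂ) * inner ℂ (xi w) (B (xi 1))}
          = ⋂ v, ⋂ w, {B | (inner ℂ (xi (w * v)) (B (xi v)) : ℂ) =
            ((((WmuFun mu 1 v)⁻¹ * WmuFun mu w v : ℝ)) : ℂ) * inner ℂ (xi w) (B (xi 1))} := by
        ext B; simp [Set.mem_iInter]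
      rw [this]
      exact isClosed_iInter fun v => isClosed_iInter fun w =>
        isClosed_eq (hcont _ _) (continuous_const.mul (hcont _ _))
    · have : {B : Hn n →WOT[ℂ] Hn n | ∀ v x : FreeMonoid (Fin n), (¬ ∃ w, x = w * v) →
          (inner ℂ (xi x) (B (xi v)) : ℂ) = 0}
          = ⋂ v, ⋂ x, {B | (¬ ∃ w, x = w * v) → (inner ℂ (xi x) (B (xi v)) : ℂ) = 0} := by
        ext B; simp [Set.mem_iInter]
      rw [this]
      refine isClosed_iInter fun v => isClosed_iInter fun x => ?_
      by_cases h : ∃ w, x = w * v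
      · simp only [h, not_true_eq_false, false_implies, Set.setOf_true]
        exact isClosed_univ
      · simp only [h, not_false_eq_true, true_implies]
        exact isClosed_eq (hcont _ _) continuous_const
  have himg : (ContinuousLinearMapWOT.ofCLM :
      (Hn n →L[ℂ] Hn n) → ContinuousLinearMapWOT (RingHom.id ℂ) (Hn n) (Hn n)) ''
      (Algebra.adjoin ℂ (Set.range T) : Subalgebra ℂ (Hn n →L[ℂ] Hn n)) ⊆ S := by
    rintro _ ⟨B, hB, rfl⟩
    obtain ⟨hB1, hB2⟩ := halg B hB
    constructor
    · intro v w
      simpa [ContinuousLinearMap.toWOT_apply] using hB1 v w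
    · intro v x hx'
      simpa [ContinuousLinearMap.toWOT_apply] using hB2 v x hx'
  have hAS : (ContinuousLinearMapWOT.ofCLM A : ContinuousLinearMapWOT (RingHom.id ℂ) (Hn n) (Hn n)) ∈ S :=
    closure_minimal himg hSclosed hA
  obtain ⟨hA1, hA2⟩ := hAS
  constructor
  · intro v w
    have h := hA1 v w
    rw [ContinuousLinearMap.toWOT_apply, ContinuousLinearMap.toWOT_apply] at h
    have h' := congrArg (starRingEnd ℂ) h
    rw [inner_conj_symm, map_mul, inner_conj_symm, Complex.conj_ofReal] at h'
    rw [h', ha w]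
    push_cast
    ring
  · intro v x hx'
    have h := hA2 v x hx'
    rw [ContinuousLinearMap.toWOT_apply] at h
    rw [← inner_conj_symm, h, map_zero]
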